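/- (Edge conservation lemma) Let (A,u,v) ∈ ℛ and let j ∈ ℤ/nℤ be such that neither u nor v lies in row j. Define H_j as the number of vacant horizontal edges of row j (edges (i,j)(i+1,j) ∉ A), U_j as the number of occupied up-pointing vertical edges of row j (edges (i,j)(i,j+1) ∈ A with i+j even), and D_j as the number of occupied down-pointing vertical edges of row j (edges (i,j)(i,j−1) ∈ A with i+j odd). Then H_j = U_j = D_j. -/

import Mathlib

attribute [local instance] Classical.propDecidable

namespace FPL

/-- Vertices of the brick-wall honeycomb lattice with periodic boundary conditions. -/
abbrev Vtx (m n : ℕ) := ZMod m × ZMod n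

/-- Adjacency on the brick-wall honeycomb lattice: horizontal edges between `(i,j)` and
`(i+1,j)`, and vertical edges between `(i,j)` and `(i,j+1)` whenever `i+j` is even. -/
def HoneyAdj (m n : ℕ) (x y : Vtx m n) : Prop :=
  (x.2 = y.2 ∧ (y.1 = x.1 + 1 ∨ x.1 = y.1 + 1)) ∨
  (x.1 = y.1 ∧ ((y.2 = x.2 + 1 ∧ Even (x.1.val + x.2.val)) ∨
                (x.2 = y.2 + 1 ∧ Even (y.1.val + y.2.val))))

variable (m n : ℕ) [NeZero m] [NeZero n]

/-- The edge set of the brick-wall honeycomb lattice. -/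
noncomputable def honeyEdges : Finset (Sym2 (Vtx m n)) :=
  Finset.image (fun p : Vtx m n × Vtx m n => s(p.1, p.2))
    (Finset.univ.filter fun p => HoneyAdj m n p.1 p.2)

/-- `bdeg m n A x` is the degree of the vertex `x` in the spanning subgraph `(V, A)`. -/
noncomputable def bdeg (A : Finset (Sym2 (Vtx m n))) (x : Vtx m n) : ℕ :=
  (A.filter fun e => x ∈ e).card

/-- `(A,u,v)` is a state of the worm chain: `A ⊆ E`, and the set of odd-degree vertices of
`(V,A)` is `{u,v}` if `u ≠ v`, and is empty if `u = v`. -/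
def IsWormState (A : Finset (Sym2 (Vtx m n))) (u v : Vtx m n) : Prop :=
  A ⊆ honeyEdges m n ∧ ∀ x, (Odd (bdeg m n A x) ↔ ((x = u ∨ x = v) ∧ u ≠ v))

/-- The worm state space `𝒮`. -/
abbrev WormState := {p : Finset (Sym2 (Vtx m n)) × Vtx m n × Vtx m n //
  IsWormState m n p.1 p.2.1 p.2.2}

/-- The set `ℛ` of states with no isolated vertices. -/
def FullSupport (st : WormState m n) : Prop := ∀ x : Vtx m n, bdeg m n st.1.1 x ≠ 0

/-- The fully-packed worm transition matrix `P'_∞`. -/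
noncomputable def Pinf : Matrix (WormState m n) (WormState m n) ℝ := fun st tt =>
  if st.1.2.1 = st.1.2.2 then
    (if tt = st then (bdeg m n st.1.1 st.1.2.2 : ℝ) / 3 else 0) +
    (if ∃ v' : Vtx m n, HoneyAdj m n st.1.2.2 v' ∧ s(st.1.2.2, v') ∉ st.1.1 ∧
        tt.1.1 = insert s(st.1.2.2, v') st.1.1 ∧
        ((tt.1.2.1 = v' ∧ tt.1.2.2 = st.1.2.2) ∨ (tt.1.2.1 = st.1.2.2 ∧ tt.1.2.2 = v'))
      then 1/6 else 0)
  else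
    (if bdeg m n st.1.1 st.1.2.1 = 3 ∧ ∃ u' : Vtx m n, HoneyAdj m n st.1.2.1 u' ∧
        s(st.1.2.1, u') ∈ st.1.1 ∧ tt.1.1 = st.1.1.erase s(st.1.2.1, u') ∧
        tt.1.2.1 = u' ∧ tt.1.2.2 = st.1.2.2 then 1/6 else 0) +
    (if bdeg m n st.1.1 st.1.2.1 = 1 ∧ ∃ u' : Vtx m n, HoneyAdj m n st.1.2.1 u' ∧
        s(st.1.2.1, u') ∉ st.1.1 ∧ tt.1.1 = insert s(st.1.2.1, u') st.1.1 ∧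
        tt.1.2.1 = u' ∧ tt.1.2.2 = st.1.2.2 then 1/4 else 0) +
    (if bdeg m n st.1.1 st.1.2.2 = 3 ∧ ∃ v' : Vtx m n, HoneyAdj m n st.1.2.2 v' ∧
        s(st.1.2.2, v') ∈ st.1.1 ∧ tt.1.1 = st.1.1.erase s(st.1.2.2, v') ∧
        tt.1.2.1 = st.1.2.1 ∧ tt.1.2.2 = v' then 1/6 else 0) +
    (if bdeg m n st.1.1 st.1.2.2 = 1 ∧ ∃ v' : Vtx m n, HoneyAdj m n st.1.2.2 v' ∧
        s(st.1.2.2, v') ∉ st.1.1 ∧ tt.1.1 = insert s(st.1.2.2, v') st.1.1 ∧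
        tt.1.2.1 = st.1.2.1 ∧ tt.1.2.2 = v' then 1/4 else 0)

/-- `st → tt`: some power of `P'_∞` has positive `(st,tt)` entry. -/
def Reaches (st tt : WormState m n) : Prop := ∃ k : ℕ, 0 < (Pinf m n ^ k) st tt

/-- `st ↔ tt`: mutual reachability. -/
def Comm (st tt : WormState m n) : Prop := Reaches m n st tt ∧ Reaches m n tt st

/-- The fully-packed configuration consisting of all horizontal edges. -/
noncomputable def Hconfig : Finset (Sym2 (Vtx m n)) :=
  Finset.image (fun p : Vtx m n => s(p, (p.1 + 1, p.2))) Finset.univ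

section Aux

variable {m n : ℕ} [NeZero m] [NeZero n]

lemma zmod_nat_ne_zero (k : ℕ) (hk : 0 < k) (hkm : k < m) : (k : ZMod m) ≠ 0 := by
  intro hh
  have hd : (m : ℕ) ∣ k := (ZMod.natCast_eq_zero_iff k m).mp hh
  have := Nat.le_of_dvd hk hd
  omega

lemma val_succ_mod_two {k : ℕ} [NeZero k] (hk : 2 ∣ k) (hk1 : 1 < k) (i : ZMod k) :
    (i + 1).val % 2 = (i.val + 1) % 2 := by
  haveI : Fact (1 < k) := ⟨hk1⟩
  rw [ZMod.val_add, ZMod.val_one, Nat.mod_mod_of_dvd _ hk]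

lemma flip_left {k : ℕ} [NeZero k] (hk : 2 ∣ k) (hk1 : 1 < k) (i : ZMod k) (c : ℕ) :
    Even ((i + 1).val + c) ↔ ¬ Even (i.val + c) := by
  have h := val_succ_mod_two hk hk1 i
  simp only [Nat.even_iff] at *
  omega

lemma flip_right {k : ℕ} [NeZero k] (hk : 2 ∣ k) (hk1 : 1 < k) (c : ℕ) (i : ZMod k) :
    Even (c + (i + 1).val) ↔ ¬ Even (c + i.val) := by
  have h := val_succ_mod_two hk hk1 i
  simp only [Nat.even_iff] at *
  omega

/-- Any honeycomb edge containing `(i,j)` is one of its three incident edges. -/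
lemma mem_incident (hn : Even n) (hn4 : 4 ≤ n)
    {e : Sym2 (Vtx m n)} (he : e ∈ honeyEdges m n)
    (i : ZMod m) (j : ZMod n) (hxe : ((i, j) : Vtx m n) ∈ e) :
    e = s(((i - 1, j) : Vtx m n), ((i, j) : Vtx m n)) ∨
    e = s(((i, j) : Vtx m n), ((i + 1, j) : Vtx m n)) ∨
    e = (if Even (i.val + j.val) then s(((i, j) : Vtx m n), ((i, j + 1) : Vtx m n))
         else s(((i, j) : Vtx m n), ((i, j - 1) : Vtx m n))) := by
  have hn2 : 2 ∣ n := hn.two_dvd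
  have hn1 : 1 < n := by omega
  simp only [honeyEdges, Finset.mem_image, Finset.mem_filter, Finset.mem_univ, true_and] at he
  obtain ⟨⟨⟨a1, a2⟩, ⟨b1, b2⟩⟩, hadj, rfl⟩ := he
  simp only [Sym2.mem_iff, Prod.mk.injEq] at hxe
  simp only [HoneyAdj] at hadj
  rcases hxe with ⟨h1, h2⟩ | ⟨h1, h2⟩
  · subst h1; subst h2
    rcases hadj with ⟨hj, hb | hb⟩ | ⟨hi, ⟨hb2, hpar⟩ | ⟨hb2, hpar⟩⟩
    · right; left; rw [← hj, hb]
    · left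
      have h : b1 = i - 1 := by rw [hb]; ring
      rw [← hj, h, Sym2.eq_swap]
    · right; right
      rw [if_pos hpar, hb2, ← hi]
    · right; right
      have h : b2 = j - 1 := by rw [hb2]; ring
      rw [← hi] at hpar
      have hne : ¬ Even (i.val + j.val) := by
        rw [hb2]
        intro hc
        exact (flip_right hn2 hn1 i.val b2).mp hc hpar
      rw [if_neg hne, h, ← hi]
  · subst h1; subst h2
    rcases hadj with ⟨hj, hb | hb⟩ | ⟨hi, ⟨hb2, hpar⟩ | ⟨hb2, hpar⟩⟩
    · left
      have h : a1 = i - 1 := by rw [hb]; ring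
      rw [hj, h]
    · right; left
      rw [hj, hb, Sym2.eq_swap]
    · right; right
      have h : a2 = j - 1 := by rw [hb2]; ring
      rw [hi] at hpar
      have hne : ¬ Even (i.val + j.val) := by
        rw [hb2]
        intro hc
        exact (flip_right hn2 hn1 i.val a2).mp hc hpar
      rw [if_neg hne, hi, h, Sym2.eq_swap]
    · right; right
      rw [if_pos hpar, hi, hb2, Sym2.eq_swap]

end Aux
section Aux2
set_option maxHeartbeats 1000000

variable {m n : ℕ} [NeZero m] [NeZero n]

/-- At a vertex of even nonzero degree with its three incident edges, exactly two are present. -/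
lemma two_of_three (hm : Even m) (hn : Even n) (hm4 : 4 ≤ m) (hn4 : 4 ≤ n)
    (A : Finset (Sym2 (Vtx m n))) (hA : A ⊆ honeyEdges m n)
    (i : ZMod m) (j : ZMod n)
    (heven : Even (bdeg m n A (i, j))) (hne : bdeg m n A (i, j) ≠ 0) :
    (s(((i - 1, j) : Vtx m n), ((i, j) : Vtx m n)) ∈ A ∧
       s(((i, j) : Vtx m n), ((i + 1, j) : Vtx m n)) ∈ A ∧
       (if Even (i.val + j.val) then s(((i, j) : Vtx m n), ((i, j + 1) : Vtx m n))
         else s(((i, j) : Vtx m n), ((i, j - 1) : Vtx m n))) ∉ A) ∨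
    (s(((i - 1, j) : Vtx m n), ((i, j) : Vtx m n)) ∈ A ∧
       s(((i, j) : Vtx m n), ((i + 1, j) : Vtx m n)) ∉ A ∧
       (if Even (i.val + j.val) then s(((i, j) : Vtx m n), ((i, j + 1) : Vtx m n))
         else s(((i, j) : Vtx m n), ((i, j - 1) : Vtx m n))) ∈ A) ∨
    (s(((i - 1, j) : Vtx m n), ((i, j) : Vtx m n)) ∉ A ∧
       s(((i, j) : Vtx m n), ((i + 1, j) : Vtx m n)) ∈ A ∧
       (if Even (i.val + j.val) then s(((i, j) : Vtx m n), ((i, j + 1) : Vtx m n))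
         else s(((i, j) : Vtx m n), ((i, j - 1) : Vtx m n))) ∈ A) := by
  set t1 : Sym2 (Vtx m n) := s(((i - 1, j) : Vtx m n), ((i, j) : Vtx m n)) with ht1
  set t2 : Sym2 (Vtx m n) := s(((i, j) : Vtx m n), ((i + 1, j) : Vtx m n)) with ht2
  set t3 : Sym2 (Vtx m n) :=
    (if Even (i.val + j.val) then s(((i, j) : Vtx m n), ((i, j + 1) : Vtx m n))
      else s(((i, j) : Vtx m n), ((i, j - 1) : Vtx m n))) with ht3
  have hone : (1 : ZMod m) ≠ 0 := by
    have := zmod_nat_ne_zero (m := m) 1 (by norm_num) (by omega)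
    simpa using this
  have htwo : (2 : ZMod m) ≠ 0 := by
    have := zmod_nat_ne_zero (m := m) 2 (by norm_num) (by omega)
    simpa using this
  have honen : (1 : ZMod n) ≠ 0 := by
    have := zmod_nat_ne_zero (m := n) 1 (by norm_num) (by omega)
    simpa using this
  have f1 : (i - 1 : ZMod m) ≠ i := fun h => hone (by linear_combination -h)
  have f2 : (i - 1 : ZMod m) ≠ i + 1 := fun h => htwo (by linear_combination -h)
  have f3 : (i : ZMod m) ≠ i + 1 := fun h => hone (by linear_combination -h)
  have g1 : (j : ZMod n) ≠ j + 1 := fun h => honen (by linear_combination -h)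
  have g2 : (j : ZMod n) ≠ j - 1 := fun h => honen (by linear_combination h)
  have h12 : t1 ≠ t2 := by
    rw [ht1, ht2]
    simp [Sym2.eq_iff, Prod.mk.injEq, f1, f2, f1.symm, f2.symm, f3, f3.symm]
  have h13 : t1 ≠ t3 := by
    rw [ht1, ht3]
    split_ifs <;>
      simp [Sym2.eq_iff, Prod.mk.injEq, g1, g2, g1.symm, g2.symm]
  have h23 : t2 ≠ t3 := by
    rw [ht2, ht3]
    split_ifs <;>
      simp [Sym2.eq_iff, Prod.mk.injEq, g1, g2, g1.symm, g2.symm]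
  have hS : A.filter (fun e => ((i, j) : Vtx m n) ∈ e)
      = ({t1, t2, t3} : Finset (Sym2 (Vtx m n))).filter (· ∈ A) := by
    ext e
    simp only [Finset.mem_filter, Finset.mem_insert, Finset.mem_singleton]
    constructor
    · rintro ⟨heA, hxe⟩
      have := mem_incident hn hn4 (hA heA) i j hxe
      tauto
    · rintro ⟨h, heA⟩
      refine ⟨heA, ?_⟩
      rcases h with rfl | rfl | rfl
      · rw [ht1]; exact Sym2.mem_mk_right _ _
      · rw [ht2]; exact Sym2.mem_mk_left _ _
      · rw [ht3]; split_ifs <;> exact Sym2.mem_mk_left _ _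
  have hcard : bdeg m n A (i, j) =
      (if t1 ∈ A then 1 else 0) + ((if t2 ∈ A then 1 else 0) + (if t3 ∈ A then 1 else 0)) := by
    rw [bdeg, hS, Finset.card_filter, Finset.sum_insert (by simp [h12, h13]),
      Finset.sum_insert (by simp [h23]), Finset.sum_singleton]
  rw [Nat.even_iff] at heven
  by_cases b1 : t1 ∈ A <;> by_cases b2 : t2 ∈ A <;> by_cases b3 : t3 ∈ A <;>
    simp only [b1, b2, b3, if_true, if_false] at hcard <;>
    first
      | tauto
      | (exfalso; omega)

end Aux2
theorem edge_conservation (m n : ℕ) [NeZero m] [NeZero n]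
    (hm : Even m) (hn : Even n) (hm4 : 4 ≤ m) (hn4 : 4 ≤ n)
    (st : WormState m n) (hR : FullSupport m n st)
    (j : ZMod n) (hu : st.1.2.1.2 ≠ j) (hv : st.1.2.2.2 ≠ j) :
    (Finset.univ.filter fun i : ZMod m => s(((i, j) : Vtx m n), ((i + 1, j) : Vtx m n)) ∉ st.1.1).card
        = (Finset.univ.filter fun i : ZMod m =>
            Even (i.val + j.val) ∧ s(((i, j) : Vtx m n), ((i, j + 1) : Vtx m n)) ∈ st.1.1).card ∧
    (Finset.univ.filter fun i : ZMod m =>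
            Even (i.val + j.val) ∧ s(((i, j) : Vtx m n), ((i, j + 1) : Vtx m n)) ∈ st.1.1).card
        = (Finset.univ.filter fun i : ZMod m =>
            ¬ Even (i.val + j.val) ∧ s(((i, j) : Vtx m n), ((i, j - 1) : Vtx m n)) ∈ st.1.1).card := by
  obtain ⟨⟨A, u, v⟩, hA, hdeg⟩ := st
  dsimp only at hR hu hv ⊢
  simp only [FullSupport] at hR
  have hm2 : 2 ∣ m := hm.two_dvd
  have hm1 : 1 < m := by omega
  -- every vertex of row j has even degree
  have hpar : ∀ i : ZMod m, Even (bdeg m n A (i, j)) := by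
    intro i
    have h := hdeg (i, j)
    rw [← Nat.not_odd_iff_even, h]
    rintro ⟨h1 | h1, -⟩
    · exact hu (congrArg Prod.snd h1).symm
    · exact hv (congrArg Prod.snd h1).symm
  have key : ∀ i : ZMod m,
      (s(((i - 1, j) : Vtx m n), ((i, j) : Vtx m n)) ∈ A ∧
        s(((i, j) : Vtx m n), ((i + 1, j) : Vtx m n)) ∈ A ∧
        (if Even (i.val + j.val) then s(((i, j) : Vtx m n), ((i, j + 1) : Vtx m n))
          else s(((i, j) : Vtx m n), ((i, j - 1) : Vtx m n))) ∉ A) ∨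
      (s(((i - 1, j) : Vtx m n), ((i, j) : Vtx m n)) ∈ A ∧
        s(((i, j) : Vtx m n), ((i + 1, j) : Vtx m n)) ∉ A ∧
        (if Even (i.val + j.val) then s(((i, j) : Vtx m n), ((i, j + 1) : Vtx m n))
          else s(((i, j) : Vtx m n), ((i, j - 1) : Vtx m n))) ∈ A) ∨
      (s(((i - 1, j) : Vtx m n), ((i, j) : Vtx m n)) ∉ A ∧
        s(((i, j) : Vtx m n), ((i + 1, j) : Vtx m n)) ∈ A ∧
        (if Even (i.val + j.val) then s(((i, j) : Vtx m n), ((i, j + 1) : Vtx m n))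
          else s(((i, j) : Vtx m n), ((i, j - 1) : Vtx m n))) ∈ A) :=
    fun i => two_of_three hm hn hm4 hn4 A hA i j (hpar i) (hR (i, j))
  -- the vertical edge at a vertex is present iff some adjacent horizontal edge is vacant
  have hvert : ∀ k : ZMod m,
      ((if Even (k.val + j.val) then s(((k, j) : Vtx m n), ((k, j + 1) : Vtx m n))
          else s(((k, j) : Vtx m n), ((k, j - 1) : Vtx m n))) ∈ A)
      ↔ (s(((k - 1, j) : Vtx m n), ((k - 1 + 1, j) : Vtx m n)) ∉ A ∨
         s(((k, j) : Vtx m n), ((k + 1, j) : Vtx m n)) ∉ A) := by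
    intro k
    have hk := key k
    rw [sub_add_cancel]
    tauto
  -- no two adjacent horizontal edges are both vacant
  have hnoadj : ∀ k : ZMod m,
      ¬ (s(((k - 1, j) : Vtx m n), ((k - 1 + 1, j) : Vtx m n)) ∉ A ∧
         s(((k, j) : Vtx m n), ((k + 1, j) : Vtx m n)) ∉ A) := by
    intro k
    have hk := key k
    rw [sub_add_cancel]
    tauto
  have hflip : ∀ i : ZMod m, Even ((i + 1).val + j.val) ↔ ¬ Even (i.val + j.val) :=
    fun i => flip_left hm2 hm1 i j.val
  have hup : ∀ k : ZMod m, Even (k.val + j.val) →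
      (s(((k, j) : Vtx m n), ((k, j + 1) : Vtx m n)) ∈ A
        ↔ (s(((k - 1, j) : Vtx m n), ((k - 1 + 1, j) : Vtx m n)) ∉ A ∨
           s(((k, j) : Vtx m n), ((k + 1, j) : Vtx m n)) ∉ A)) := by
    intro k hk
    have := hvert k
    rwa [if_pos hk] at this
  have hdown : ∀ k : ZMod m, ¬ Even (k.val + j.val) →
      (s(((k, j) : Vtx m n), ((k, j - 1) : Vtx m n)) ∈ A
        ↔ (s(((k - 1, j) : Vtx m n), ((k - 1 + 1, j) : Vtx m n)) ∉ A ∨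
           s(((k, j) : Vtx m n), ((k + 1, j) : Vtx m n)) ∉ A)) := by
    intro k hk
    have := hvert k
    rwa [if_neg hk] at this
  have hHU : (Finset.univ.filter fun i : ZMod m =>
        s(((i, j) : Vtx m n), ((i + 1, j) : Vtx m n)) ∉ A).card
      = (Finset.univ.filter fun i : ZMod m =>
        Even (i.val + j.val) ∧ s(((i, j) : Vtx m n), ((i, j + 1) : Vtx m n)) ∈ A).card := by
    apply Finset.card_bij (fun a _ => if Even (a.val + j.val) then a else a + 1)
    · intro a ha
      simp only [Finset.mem_filter, Finset.mem_univ, true_and] at ha ⊢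
      by_cases hp : Even (a.val + j.val)
      · rw [if_pos hp]
        exact ⟨hp, (hup a hp).mpr (Or.inr ha)⟩
      · rw [if_neg hp]
        refine ⟨(hflip a).mpr hp, ?_⟩
        refine (hup (a + 1) ((hflip a).mpr hp)).mpr (Or.inl ?_)
        rw [add_sub_cancel_right]
        exact ha
    · intro a1 ha1 a2 ha2 heq
      simp only [Finset.mem_filter, Finset.mem_univ, true_and] at ha1 ha2
      by_cases h1 : Even (a1.val + j.val) <;> by_cases h2 : Even (a2.val + j.val)
      · rwa [if_pos h1, if_pos h2] at heq
      · rw [if_pos h1, if_neg h2] at heq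
        exfalso
        apply hnoadj a1
        have h3 : a2 = a1 - 1 := by rw [heq]; ring
        rw [h3] at ha2
        exact ⟨ha2, ha1⟩
      · rw [if_neg h1, if_pos h2] at heq
        exfalso
        apply hnoadj a2
        have h3 : a1 = a2 - 1 := by rw [← heq]; ring
        rw [h3] at ha1
        exact ⟨ha1, ha2⟩
      · rw [if_neg h1, if_neg h2] at heq
        exact add_right_cancel heq
    · intro b hb
      simp only [Finset.mem_filter, Finset.mem_univ, true_and] at hb
      obtain ⟨hbp, hbe⟩ := hb
      rcases (hup b hbp).mp hbe with h | h
      · have hnb : ¬ Even ((b - 1).val + j.val) := by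
          have h2 := hflip (b - 1)
          rw [sub_add_cancel] at h2
          exact h2.mp hbp
        refine ⟨b - 1, ?_, ?_⟩
        · simp only [Finset.mem_filter, Finset.mem_univ, true_and]
          exact h
        · rw [if_neg hnb, sub_add_cancel]
      · refine ⟨b, ?_, ?_⟩
        · simp only [Finset.mem_filter, Finset.mem_univ, true_and]
          exact h
        · rw [if_pos hbp]
  have hHD : (Finset.univ.filter fun i : ZMod m =>
        s(((i, j) : Vtx m n), ((i + 1, j) : Vtx m n)) ∉ A).card
      = (Finset.univ.filter fun i : ZMod m =>
        ¬ Even (i.val + j.val) ∧ s(((i, j) : Vtx m n), ((i, j - 1) : Vtx m n)) ∈ A).card := by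
    apply Finset.card_bij (fun a _ => if Even (a.val + j.val) then a + 1 else a)
    · intro a ha
      simp only [Finset.mem_filter, Finset.mem_univ, true_and] at ha ⊢
      by_cases hp : Even (a.val + j.val)
      · rw [if_pos hp]
        have hnp : ¬ Even ((a + 1).val + j.val) := fun hc => (hflip a).mp hc hp
        refine ⟨hnp, ?_⟩
        refine (hdown (a + 1) hnp).mpr (Or.inl ?_)
        rw [add_sub_cancel_right]
        exact ha
      · rw [if_neg hp]
        exact ⟨hp, (hdown a hp).mpr (Or.inr ha)⟩
    · intro a1 ha1 a2 ha2 heq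
      simp only [Finset.mem_filter, Finset.mem_univ, true_and] at ha1 ha2
      by_cases h1 : Even (a1.val + j.val) <;> by_cases h2 : Even (a2.val + j.val)
      · rw [if_pos h1, if_pos h2] at heq
        exact add_right_cancel heq
      · rw [if_pos h1, if_neg h2] at heq
        exfalso
        apply hnoadj a2
        have h3 : a1 = a2 - 1 := by rw [← heq]; ring
        rw [h3] at ha1
        exact ⟨ha1, ha2⟩
      · rw [if_neg h1, if_pos h2] at heq
        exfalso
        apply hnoadj a1
        have h3 : a2 = a1 - 1 := by rw [heq]; ring
        rw [h3] at ha2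
        exact ⟨ha2, ha1⟩
      · rwa [if_neg h1, if_neg h2] at heq
    · intro b hb
      simp only [Finset.mem_filter, Finset.mem_univ, true_and] at hb
      obtain ⟨hbp, hbe⟩ := hb
      rcases (hdown b hbp).mp hbe with h | h
      · have hpb : Even ((b - 1).val + j.val) := by
          by_contra hc
          have h2 := hflip (b - 1)
          rw [sub_add_cancel] at h2
          exact hbp (h2.mpr hc)
        refine ⟨b - 1, ?_, ?_⟩
        · simp only [Finset.mem_filter, Finset.mem_univ, true_and]
          exact h
        · rw [if_pos hpb, sub_add_cancel]
      · refine ⟨b, ?_, ?_⟩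
        · simp only [Finset.mem_filter, Finset.mem_univ, true_and]
          exact h
        · rw [if_neg hbp]
  exact ⟨hHU, hHU.symm.trans hHD⟩

end FPL
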